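/- A set X ⊆ F is a weak AXp for (κ, v) if and only if X intersects every CXp of (κ, v); dually, a set Y is a weak CXp if and only if Y intersects every AXp (minimal hitting set duality between abductive and contrastive explanations). -/
import Mathlib


open Finset

/-- `X` is a weak abductive explanation (weak AXp) for classifier `κ` at point `v`:
every point agreeing with `v` on `X` gets the same prediction as `v`. -/
def weakAXp {n : ℕ} (κ : (Fin n → Bool) → Bool) (v : Fin n → Bool)
    (X : Finset (Fin n)) : Prop :=
  ∀ x : Fin n → Bool, (∀ i ∈ X, x i = v i) → κ x = κ v

/-- `X` is an AXp: a subset-minimal weak AXp. -/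
def AXp {n : ℕ} (κ : (Fin n → Bool) → Bool) (v : Fin n → Bool)
    (X : Finset (Fin n)) : Prop :=
  weakAXp κ v X ∧ ∀ X' ⊂ X, ¬ weakAXp κ v X'

/-- `Y` is a weak contrastive explanation (weak CXp) for `κ` at `v`:
some point agreeing with `v` outside `Y` gets a different prediction. -/
def weakCXp {n : ℕ} (κ : (Fin n → Bool) → Bool) (v : Fin n → Bool)
    (Y : Finset (Fin n)) : Prop :=
  ∃ x : Fin n → Bool, (∀ i ∉ Y, x i = v i) ∧ κ x ≠ κ v

/-- `Y` is a CXp: a subset-minimal weak CXp. -/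
def CXp {n : ℕ} (κ : (Fin n → Bool) → Bool) (v : Fin n → Bool)
    (Y : Finset (Fin n)) : Prop :=
  weakCXp κ v Y ∧ ∀ Y' ⊂ Y, ¬ weakCXp κ v Y'

/-- A feature is relevant if it occurs in some AXp. -/
def Relevant {n : ℕ} (κ : (Fin n → Bool) → Bool) (v : Fin n → Bool) (i : Fin n) : Prop :=
  ∃ X, AXp κ v X ∧ i ∈ X

/-- A feature is irrelevant if it occurs in no AXp. -/
def Irrelevant {n : ℕ} (κ : (Fin n → Bool) → Bool) (v : Fin n → Bool) (i : Fin n) : Prop :=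
  ¬ Relevant κ v i

/-- `phi κ v S` : average value of `κ` over points agreeing with `v` on `S`
(uniform distribution). -/
noncomputable def phi {n : ℕ} (κ : (Fin n → Bool) → Bool) (v : Fin n → Bool)
    (S : Finset (Fin n)) : ℝ :=
  (1 / 2 ^ (n - S.card)) *
    ∑ x ∈ Finset.univ.filter (fun x : Fin n → Bool => ∀ i ∈ S, x i = v i),
      (if κ x then (1 : ℝ) else 0)

/-- Shapley value of feature `i` for classifier `κ` at point `v`. -/
noncomputable def Sv {n : ℕ} (κ : (Fin n → Bool) → Bool) (v : Fin n → Bool)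
    (i : Fin n) : ℝ :=
  ∑ S ∈ (Finset.univ.erase i).powerset,
    ((S.card.factorial * (n - S.card - 1).factorial : ℝ) / n.factorial) *
      (phi κ v (insert i S) - phi κ v S)


lemma shrink {n : ℕ} (P : Finset (Fin n) → Prop) :
    ∀ S, P S → ∃ T, T ⊆ S ∧ P T ∧ ∀ T' ⊂ T, ¬ P T' := by
  intro S
  induction S using Finset.strongInduction with
  | _ S ih =>
    intro hS
    by_cases h : ∀ T' ⊂ S, ¬ P T'
    · exact ⟨S, subset_rfl, hS, h⟩
    · push_neg at h
      obtain ⟨T', hsub, hT'⟩ := h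
      obtain ⟨T, h1, h2, h3⟩ := ih T' hsub hT'
      exact ⟨T, h1.trans hsub.subset, h2, h3⟩

lemma not_weakCXp_compl {n : ℕ} (κ : (Fin n → Bool) → Bool) (v : Fin n → Bool)
    (X : Finset (Fin n)) : ¬ weakCXp κ v Xᶜ ↔ weakAXp κ v X := by
  unfold weakCXp weakAXp
  push_neg
  constructor
  · intro h x hx
    exact h x (fun i hi => hx i (by simpa using hi))
  · intro h x hx
    exact h x (fun i hi => hx i (by simpa using hi))

/-- Minimal hitting set duality: `X` is a weak AXp iff it intersects every CXp,
and `Y` is a weak CXp iff it intersects every AXp. -/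
theorem stmt2 {n : ℕ} (κ : (Fin n → Bool) → Bool) (v : Fin n → Bool) :
    (∀ X : Finset (Fin n),
      weakAXp κ v X ↔ ∀ Y, CXp κ v Y → (X ∩ Y).Nonempty) ∧
    (∀ Y : Finset (Fin n),
      weakCXp κ v Y ↔ ∀ X, AXp κ v X → (Y ∩ X).Nonempty) := by
  constructor
  · intro X
    constructor
    · rintro hX Y ⟨⟨x, hx, hne⟩, _⟩
      by_contra hempty
      rw [Finset.not_nonempty_iff_eq_empty] at hempty
      apply hne
      apply hX
      intro i hi
      apply hx
      intro hiY
      exact Finset.notMem_empty i (hempty ▸ Finset.mem_inter.2 ⟨hi, hiY⟩)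
    · intro h
      by_contra hX
      rw [← not_weakCXp_compl, not_not] at hX
      obtain ⟨Y, hYsub, hY, hmin⟩ := shrink (weakCXp κ v) _ hX
      obtain ⟨i, hi⟩ := h Y ⟨hY, hmin⟩
      rw [Finset.mem_inter] at hi
      exact (Finset.mem_compl.1 (hYsub hi.2)) hi.1
  · intro Y
    constructor
    · rintro ⟨x, hx, hne⟩ X ⟨hX, _⟩
      by_contra hempty
      rw [Finset.not_nonempty_iff_eq_empty] at hempty
      apply hne
      apply hX
      intro i hi
      apply hx
      intro hiY
      exact Finset.notMem_empty i (hempty ▸ Finset.mem_inter.2 ⟨hiY, hi⟩)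
    · intro h
      by_contra hY
      have hY' : weakAXp κ v Yᶜ :=
        (not_weakCXp_compl κ v Yᶜ).1 (by simpa using hY)
      obtain ⟨X, hXsub, hX, hmin⟩ := shrink (weakAXp κ v) _ hY'
      obtain ⟨i, hi⟩ := h X ⟨hX, hmin⟩
      rw [Finset.mem_inter] at hi
      exact (Finset.mem_compl.1 (hXsub hi.2)) hi.1
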